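/- Let Σ_t be a differentiable family of 2×2 symmetric matrices satisfying Σ̇ = ΣA + AᵀΣ − ΣBBᵀΣ + Q, where A = [[0,−mω²],[1/m,0]], B = diag(√(η_x k_x), √(η_p k_p)), Q = (ℏ²/4)diag(k_p, k_x). Then d_t := det Σ_t satisfies ḋ_t = tr(BΣ_tB)·((ℏ²/4)·tr(χBΣ_tB)/tr(BΣ_tB) − d_t), where χ = diag(1/η_x, 1/η_p), provided tr(BΣ_tB) ≠ 0. -/

import Mathlib

open Matrix

theorem stmt_11 (m ω ℏ kx kp ηx ηp : ℝ)
    (hm : 0 < m) (hω : 0 < ω) (hℏ : 0 < ℏ) (hkx : 0 < kx) (hkp : 0 < kp)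
    (hηx : 0 < ηx) (hηx1 : ηx ≤ 1) (hηp : 0 < ηp) (hηp1 : ηp ≤ 1)
    (S D : ℝ → Matrix (Fin 2) (Fin 2) ℝ)
    (hsym : ∀ t, (S t)ᵀ = S t)
    (hderiv : ∀ t i j, HasDerivAt (fun s => S s i j) (D t i j) t)
    (hode : ∀ t, D t =
      S t * !![0, -m * ω ^ 2; 1 / m, 0] + (!![0, -m * ω ^ 2; 1 / m, 0])ᵀ * S t
        - S t * !![Real.sqrt (ηx * kx), 0; 0, Real.sqrt (ηp * kp)] *
            (!![Real.sqrt (ηx * kx), 0; 0, Real.sqrt (ηp * kp)])ᵀ * S t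
        + (ℏ ^ 2 / 4) • !![kp, 0; 0, kx]) :
    ∀ t : ℝ,
      let B : Matrix (Fin 2) (Fin 2) ℝ := !![Real.sqrt (ηx * kx), 0; 0, Real.sqrt (ηp * kp)]
      let χ : Matrix (Fin 2) (Fin 2) ℝ := !![1 / ηx, 0; 0, 1 / ηp]
      (B * S t * B).trace ≠ 0 →
      HasDerivAt (fun s => (S s).det)
        ((B * S t * B).trace *
          (ℏ ^ 2 / 4 * ((χ * (B * S t * B)).trace / (B * S t * B).trace) - (S t).det)) t := by
  intro t B χ hne
  have hsqx : Real.sqrt (ηx * kx) * Real.sqrt (ηx * kx) = ηx * kx :=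
    Real.mul_self_sqrt (by positivity)
  have hsqp : Real.sqrt (ηp * kp) * Real.sqrt (ηp * kp) = ηp * kp :=
    Real.mul_self_sqrt (by positivity)
  have hs : S t 1 0 = S t 0 1 := by
    have h := congrFun (congrFun (hsym t) 0) 1
    simpa using h
  have hd : HasDerivAt (fun s => (S s).det)
      (D t 0 0 * S t 1 1 + S t 0 0 * D t 1 1 -
        (D t 0 1 * S t 1 0 + S t 0 1 * D t 1 0)) t := by
    have h := ((hderiv t 0 0).mul (hderiv t 1 1)).sub ((hderiv t 0 1).mul (hderiv t 1 0))
    rw [show (fun s => (S s).det) = fun s => S s 0 0 * S s 1 1 - S s 0 1 * S s 1 0 from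
      funext fun s => Matrix.det_fin_two _]
    exact h
  have key : (B * S t * B).trace *
      (ℏ ^ 2 / 4 * ((χ * (B * S t * B)).trace / (B * S t * B).trace) - (S t).det) =
      ℏ ^ 2 / 4 * (χ * (B * S t * B)).trace - (B * S t * B).trace * (S t).det := by
    field_simp
  rw [key]
  convert hd using 1
  rw [hode t]
  simp only [B, χ, Matrix.det_fin_two, Matrix.trace_fin_two, Matrix.add_apply,
    Matrix.sub_apply, Matrix.smul_apply, Matrix.mul_apply, Fin.sum_univ_two,
    Matrix.transpose_apply]
  simp [hs]
  field_simp
  ring_nf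
  simp only [Real.sq_sqrt (by positivity : (0:ℝ) ≤ ηx * kx), Real.sq_sqrt (by positivity : (0:ℝ) ≤ ηp * kp)]
  ring
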